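/- Factorization of the L-sums under twisted multiplicativity: let q₀, q₁ be distinct primes, q = q₀q₁, let K₀ : ℤ → ℂ be q₀-periodic, K₁ : ℤ → ℂ be q₁-periodic, and K(x) = K₀(x)K₁(x). For integers α, β, u define L_{α,β}(u; q) = q^{−1/2} Σ_{b mod q, gcd(b+βu, q)=1} K̂(b; q) e(α · \overline{(b+βu)} / q), where \overline{(b+βu)} is the inverse of b+βu mod q; define analogously L⁰_{α,β}(u) with K̂₀(·; q₀) and modulus q₀, and L¹_{α,β}(u) with K̂₁(·; q₁) and modulus q₁. Then for all integers α, β, u one has L_{α,β}(u q₁; q) = L⁰_{α q̄₁², β}(u) · L¹_{α q̄₀², β}(0), where q̄₁² denotes an inverse of q₁² mod q₀ and q̄₀² an inverse of q₀² mod q₁. -/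

import Mathlib

open scoped Real BigOperators

/-- `e x = exp(2πix)`. -/
noncomputable def e (x : ℝ) : ℂ := Complex.exp (2 * Real.pi * Complex.I * x)

/-- Normalized Fourier transform of an `s`-periodic function `F : ℤ → ℂ`:
`F̂(n; s) = s^{−1/2} Σ_{x=0}^{s−1} F(x) e(nx/s)`. -/
noncomputable def Fhat (s : ℕ) (F : ℤ → ℂ) (n : ℤ) : ℂ :=
  (Real.sqrt s : ℂ)⁻¹ * ∑ x ∈ Finset.range s, F x * e ((n : ℝ) * (x : ℝ) / (s : ℝ))

/-- The `L`-sum of modulus `s` attached to a function `Khat : ℤ → ℂ` (to be thought of as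
a normalized Fourier transform of a trace function):
`L_{α,β}(u) = s^{−1/2} Σ_{b mod s, gcd(b+βu,s)=1} Khat(b) e(α (b+βu)^{-1} / s)`. -/
noncomputable def Lsum (s : ℕ) (Khat : ℤ → ℂ) (α β u : ℤ) : ℂ :=
  (Real.sqrt s : ℂ)⁻¹ *
    ∑ b ∈ Finset.range s,
      if Int.gcd ((b : ℤ) + β * u) (s : ℤ) = 1 then
        Khat b *
          e ((α : ℝ) * (((((b : ℤ) + β * u : ℤ) : ZMod s)⁻¹).val : ℝ) / (s : ℝ))
      else 0

/-- additive character m ↦ e(m/s) on ℤ. -/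
noncomputable def psi (s : ℕ) (m : ℤ) : ℂ := e ((m : ℝ) / s)

lemma e_add (x y : ℝ) : e (x + y) = e x * e y := by
  simp [e, mul_add, Complex.exp_add]

lemma e_int (n : ℤ) : e n = 1 := by
  unfold e
  rw [show ((2:ℂ) * Real.pi * Complex.I * (n:ℝ)) = (n:ℤ) * (2 * Real.pi * Complex.I) by push_cast; ring]
  exact Complex.exp_int_mul_two_pi_mul_I n

lemma psi_congr (s : ℕ) [NeZero s] {m m' : ℤ} (h : ((m : ZMod s)) = (m' : ZMod s)) :
    psi s m = psi s m' := by
  rw [ZMod.intCast_eq_intCast_iff] at h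
  obtain ⟨k, hk⟩ := Int.ModEq.dvd h
  have hm : m = m' - s * k := by linarith [hk]
  have hs : (s : ℝ) ≠ 0 := by exact_mod_cast (NeZero.ne s)
  have : ((m : ℝ)) / s = (m' : ℝ) / s + ((-k : ℤ) : ℝ) := by
    rw [hm]; push_cast; field_simp; ring
  rw [psi, psi, this, e_add, e_int, mul_one]

lemma psi_add (s : ℕ) (m n : ℤ) : psi s (m + n) = psi s m * psi s n := by
  rw [psi, psi, psi, ← e_add]; push_cast; rw [add_div]

lemma gcd_eq_one_iff_isUnit (s : ℕ) [NeZero s] (m : ℤ) :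
    Int.gcd m (s : ℤ) = 1 ↔ IsUnit ((m : ZMod s)) := by
  have hmod : ((m : ZMod s)) = (((m % (s:ℤ)) : ℤ) : ZMod s) := by
    rw [ZMod.intCast_eq_intCast_iff]
    exact (Int.emod_emod_of_dvd m dvd_rfl).symm
  set t : ℕ := (m % (s:ℤ)).toNat with ht
  have hts : ((t : ℤ)) = m % (s:ℤ) := Int.toNat_of_nonneg (Int.emod_nonneg m (by exact_mod_cast NeZero.ne s))
  have hcast : ((m : ZMod s)) = ((t : ℕ) : ZMod s) := by
    rw [hmod, ← hts]; push_cast; ring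
  rw [hcast, ZMod.isUnit_iff_coprime]
  rw [← Int.isCoprime_iff_gcd_eq_one]
  have h1 : IsCoprime m (s:ℤ) ↔ IsCoprime ((t:ℤ)) (s:ℤ) := by
    constructor
    · intro h
      have := h.add_mul_left_left (-(m / (s:ℤ)))
      rwa [show m + (s:ℤ) * -(m / (s:ℤ)) = (t:ℤ) by rw [hts]; have := Int.emod_add_mul_ediv m (s:ℤ); ring_nf; omega] at this
    · intro h
      have := h.add_mul_left_left (m / (s:ℤ))
      rwa [show (t:ℤ) + (s:ℤ) * (m / (s:ℤ)) = m by rw [hts]; have := Int.emod_add_mul_ediv m (s:ℤ); omega] at this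
  rw [h1, Int.isCoprime_iff_gcd_eq_one, Int.gcd_natCast_natCast]

lemma periodic_congr {p : ℕ} [NeZero p] {K : ℤ → ℂ} (hK : ∀ x : ℤ, K (x + (p:ℤ)) = K x)
    {m m' : ℤ} (h : ((m : ZMod p)) = (m' : ZMod p)) : K m = K m' := by
  rw [ZMod.intCast_eq_intCast_iff] at h
  obtain ⟨k, hk⟩ := Int.ModEq.dvd h
  have hper : Function.Periodic K (p : ℤ) := hK
  have := (hper.int_mul k) m
  push_cast at this
  rw [show m + (k:ℤ) * (p:ℤ) = m' by linarith] at this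
  exact this.symm

lemma sum_range_eq_sum_zmod (s : ℕ) [NeZero s] (g : ℤ → ℂ)
    (hg : ∀ m m' : ℤ, ((m : ZMod s)) = (m' : ZMod s) → g m = g m') :
    ∑ x ∈ Finset.range s, g x = ∑ z : ZMod s, g (z.val : ℤ) := by
  refine Finset.sum_nbij' (fun x => ((x : ℕ) : ZMod s)) (fun z => z.val) ?_ ?_ ?_ ?_ ?_
  · intro a _; exact Finset.mem_univ _
  · intro z _; exact Finset.mem_range.mpr (ZMod.val_lt z)
  · intro a ha
    simp only [ZMod.val_natCast]
    exact Nat.mod_eq_of_lt (Finset.mem_range.mp ha)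
  · intro z _; show ((z.val : ℕ) : ZMod s) = z; rw [ZMod.natCast_val, ZMod.cast_id]
  · intro a _
    apply hg
    push_cast
    rw [ZMod.natCast_val, ZMod.cast_id]

lemma psi_crt (q₀ q₁ : ℕ) (h₀ : q₀ ≠ 0) (h₁ : q₁ ≠ 0) (a b : ℤ)
    (hab : a * (q₁:ℤ) + b * (q₀:ℤ) = 1) (m : ℤ) :
    psi (q₀ * q₁) m = psi q₀ (a * m) * psi q₁ (b * m) := by
  rw [psi, psi, psi, ← e_add]
  congr 1
  have hq₀ : (q₀ : ℝ) ≠ 0 := by exact_mod_cast h₀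
  have hq₁ : (q₁ : ℝ) ≠ 0 := by exact_mod_cast h₁
  have hab' : (a:ℝ) * (q₁:ℝ) + (b:ℝ) * (q₀:ℝ) = 1 := by exact_mod_cast hab
  push_cast
  field_simp
  linear_combination (-(m:ℝ)) * hab'

/-- Fhat written with psi. -/
lemma Fhat_eq_psi (s : ℕ) (F : ℤ → ℂ) (n : ℤ) :
    Fhat s F n = (Real.sqrt s : ℂ)⁻¹ * ∑ x ∈ Finset.range s, F x * psi s (n * (x:ℤ)) := by
  unfold Fhat psi
  congr 1
  refine Finset.sum_congr rfl fun x _ => ?_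
  congr 2
  push_cast
  ring

lemma Fhat_congr (s : ℕ) [NeZero s] (F : ℤ → ℂ) {n n' : ℤ}
    (h : ((n : ZMod s)) = (n' : ZMod s)) : Fhat s F n = Fhat s F n' := by
  rw [Fhat_eq_psi, Fhat_eq_psi]
  congr 1
  refine Finset.sum_congr rfl fun x _ => ?_
  congr 1
  exact psi_congr s (by push_cast [h]; ring)

lemma Lsum_eq_psi (s : ℕ) (Khat : ℤ → ℂ) (α β u : ℤ) :
    Lsum s Khat α β u = (Real.sqrt s : ℂ)⁻¹ *
      ∑ b ∈ Finset.range s,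
        if Int.gcd ((b : ℤ) + β * u) (s : ℤ) = 1 then
          Khat b * psi s (α * ((((((b : ℤ) + β * u : ℤ) : ZMod s)⁻¹).val : ℕ) : ℤ))
        else 0 := by
  unfold Lsum psi
  congr 1
  refine Finset.sum_congr rfl fun b _ => ?_
  congr 2
  · congr 2
    push_cast
    ring

lemma sqrt_mul_inv (q₀ q₁ : ℕ) :
    ((Real.sqrt ((q₀ * q₁ : ℕ)) : ℂ))⁻¹ = (Real.sqrt q₀ : ℂ)⁻¹ * ((Real.sqrt q₁ : ℂ))⁻¹ := by
  rw [show ((q₀ * q₁ : ℕ) : ℝ) = (q₀ : ℝ) * (q₁ : ℝ) by push_cast; ring]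
  rw [Real.sqrt_mul (by positivity)]
  push_cast
  rw [mul_inv]

lemma intCast_zmod_proj (q₀ q : ℕ) (hdvd : q₀ ∣ q) (m m' : ℤ)
    (h : ((m : ZMod q)) = (m' : ZMod q)) : ((m : ZMod q₀)) = (m' : ZMod q₀) := by
  have := congrArg (ZMod.castHom hdvd (ZMod q₀)) h
  rwa [map_intCast, map_intCast] at this

lemma val_intCast_self (s : ℕ) [NeZero s] (z : ZMod s) : (((z.val : ℤ) : ZMod s)) = z := by
  push_cast
  rw [ZMod.natCast_val, ZMod.cast_id]

lemma chineseRemainder_fst (q₀ q₁ : ℕ) [NeZero q₀] [NeZero q₁] (h : Nat.Coprime q₀ q₁)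
    (z : ZMod (q₀*q₁)) : (ZMod.chineseRemainder h z).1 = ((z.val : ℕ) : ZMod q₀) := by
  have : ZMod.chineseRemainder h z
      = ZMod.castHom (show Nat.lcm q₀ q₁ ∣ q₀ * q₁ by simp [Nat.lcm_dvd_iff]) (ZMod q₀ × ZMod q₁) z := rfl
  rw [this, ZMod.castHom_apply, ZMod.cast_eq_val]
  simp

lemma chineseRemainder_snd (q₀ q₁ : ℕ) [NeZero q₀] [NeZero q₁] (h : Nat.Coprime q₀ q₁)
    (z : ZMod (q₀*q₁)) : (ZMod.chineseRemainder h z).2 = ((z.val : ℕ) : ZMod q₁) := by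
  have : ZMod.chineseRemainder h z
      = ZMod.castHom (show Nat.lcm q₀ q₁ ∣ q₀ * q₁ by simp [Nat.lcm_dvd_iff]) (ZMod q₀ × ZMod q₁) z := rfl
  rw [this, ZMod.castHom_apply, ZMod.cast_eq_val]
  simp

lemma sum_zmod_factor (q₀ q₁ : ℕ) [NeZero q₀] [NeZero q₁] (h : Nat.Coprime q₀ q₁)
    (g : ℤ → ℂ) (H₀ : ZMod q₀ → ℂ) (H₁ : ZMod q₁ → ℂ)
    (key : ∀ m : ℤ, g m = H₀ ((m : ZMod q₀)) * H₁ ((m : ZMod q₁))) :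
    ∑ z : ZMod (q₀ * q₁), g (z.val : ℤ) = (∑ x : ZMod q₀, H₀ x) * (∑ x : ZMod q₁, H₁ x) := by
  have step : ∑ z : ZMod (q₀ * q₁), g (z.val : ℤ)
      = ∑ p : ZMod q₀ × ZMod q₁, H₀ p.1 * H₁ p.2 := by
    apply Fintype.sum_equiv (ZMod.chineseRemainder h).toEquiv
    intro z
    rw [key]
    have h1 : (((z.val : ℤ) : ZMod q₀)) = ((ZMod.chineseRemainder h).toEquiv z).1 := by
      rw [show ((ZMod.chineseRemainder h).toEquiv z) = ZMod.chineseRemainder h z from rfl,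
        chineseRemainder_fst]
      push_cast
      ring
    have h2 : (((z.val : ℤ) : ZMod q₁)) = ((ZMod.chineseRemainder h).toEquiv z).2 := by
      rw [show ((ZMod.chineseRemainder h).toEquiv z) = ZMod.chineseRemainder h z from rfl,
        chineseRemainder_snd]
      push_cast
      ring
    rw [h1, h2]
  rw [step, Fintype.sum_prod_type, Finset.sum_mul_sum]

lemma Fhat_factor (q₀ q₁ : ℕ) [NeZero q₀] [NeZero q₁] (h : Nat.Coprime q₀ q₁)
    (K₀ K₁ : ℤ → ℂ) (hK₀ : ∀ x : ℤ, K₀ (x + (q₀ : ℤ)) = K₀ x)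
    (hK₁ : ∀ x : ℤ, K₁ (x + (q₁ : ℤ)) = K₁ x)
    (a b : ℤ) (hab : a * (q₁:ℤ) + b * (q₀:ℤ) = 1) (n : ℤ) :
    Fhat (q₀ * q₁) (fun x => K₀ x * K₁ x) n = Fhat q₀ K₀ (a * n) * Fhat q₁ K₁ (b * n) := by
  have : NeZero (q₀ * q₁) := ⟨mul_ne_zero (NeZero.ne q₀) (NeZero.ne q₁)⟩
  rw [Fhat_eq_psi, Fhat_eq_psi, Fhat_eq_psi]
  set H₀ : ZMod q₀ → ℂ := fun x => K₀ (x.val : ℤ) * psi q₀ ((a*n) * (x.val : ℤ)) with hH₀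
  set H₁ : ZMod q₁ → ℂ := fun x => K₁ (x.val : ℤ) * psi q₁ ((b*n) * (x.val : ℤ)) with hH₁
  set g : ℤ → ℂ := fun m => K₀ m * K₁ m * psi (q₀*q₁) (n * m) with hgdef
  have hg : ∀ m m' : ℤ, ((m : ZMod (q₀*q₁))) = (m' : ZMod (q₀*q₁)) → g m = g m' := by
    intro m m' hmm
    have h0 := intCast_zmod_proj q₀ (q₀*q₁) (dvd_mul_right _ _) m m' hmm
    have h1 := intCast_zmod_proj q₁ (q₀*q₁) (dvd_mul_left _ _) m m' hmm
    simp only [hgdef]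
    rw [periodic_congr hK₀ h0, periodic_congr hK₁ h1,
      psi_congr (q₀*q₁) (show (((n*m : ℤ) : ZMod (q₀*q₁))) = ((n*m' : ℤ) : ZMod (q₀*q₁)) by
        push_cast [hmm]; ring)]
  have key : ∀ m : ℤ, g m = H₀ ((m : ZMod q₀)) * H₁ ((m : ZMod q₁)) := by
    intro m
    simp only [hgdef, hH₀, hH₁]
    rw [psi_crt q₀ q₁ (NeZero.ne q₀) (NeZero.ne q₁) a b hab (n*m)]
    have e0 : K₀ m = K₀ ((((m : ZMod q₀)).val : ℤ)) :=
      periodic_congr hK₀ (by rw [val_intCast_self])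
    have e1 : K₁ m = K₁ ((((m : ZMod q₁)).val : ℤ)) :=
      periodic_congr hK₁ (by rw [val_intCast_self])
    have p0 : psi q₀ (a * (n*m)) = psi q₀ ((a*n) * ((((m : ZMod q₀)).val : ℤ))) := by
      apply psi_congr
      push_cast [ZMod.natCast_val, ZMod.cast_id]
      ring
    have p1 : psi q₁ (b * (n*m)) = psi q₁ ((b*n) * ((((m : ZMod q₁)).val : ℤ))) := by
      apply psi_congr
      push_cast [ZMod.natCast_val, ZMod.cast_id]
      ring
    rw [e0, e1, p0, p1]
    ring
  have lhs : ∑ x ∈ Finset.range (q₀*q₁), (fun x : ℤ => K₀ x * K₁ x) x * psi (q₀*q₁) (n * x)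
      = (∑ x : ZMod q₀, H₀ x) * (∑ x : ZMod q₁, H₁ x) := by
    rw [show (∑ x ∈ Finset.range (q₀*q₁), (fun x : ℤ => K₀ x * K₁ x) x * psi (q₀*q₁) (n * x))
        = ∑ x ∈ Finset.range (q₀*q₁), g x from rfl]
    rw [sum_range_eq_sum_zmod _ g hg]
    exact sum_zmod_factor q₀ q₁ h g H₀ H₁ key
  rw [lhs]
  have r0 : ∑ x ∈ Finset.range q₀, K₀ x * psi q₀ ((a*n) * (x:ℤ)) = ∑ x : ZMod q₀, H₀ x := by
    rw [sum_range_eq_sum_zmod q₀ (fun m => K₀ m * psi q₀ ((a*n) * m))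
      (fun m m' hmm => by
        rw [periodic_congr hK₀ hmm, psi_congr q₀ (show ((((a*n) * m : ℤ) : ZMod q₀)) = (((a*n) * m' : ℤ) : ZMod q₀) by push_cast [hmm]; ring)])]
  have r1 : ∑ x ∈ Finset.range q₁, K₁ x * psi q₁ ((b*n) * (x:ℤ)) = ∑ x : ZMod q₁, H₁ x := by
    rw [sum_range_eq_sum_zmod q₁ (fun m => K₁ m * psi q₁ ((b*n) * m))
      (fun m m' hmm => by
        rw [periodic_congr hK₁ hmm, psi_congr q₁ (show ((((b*n) * m : ℤ) : ZMod q₁)) = (((b*n) * m' : ℤ) : ZMod q₁) by push_cast [hmm]; ring)])]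
  rw [r0, r1, sqrt_mul_inv]
  ring

lemma castHom_inv (q₀ q : ℕ) [NeZero q] [NeZero q₀] (hdvd : q₀ ∣ q) (X : ZMod q) (hX : IsUnit X) :
    ZMod.castHom hdvd (ZMod q₀) X⁻¹ = (ZMod.castHom hdvd (ZMod q₀) X)⁻¹ := by
  have h1 : X * X⁻¹ = 1 := ZMod.mul_inv_of_unit X hX
  have h2 := congrArg (ZMod.castHom hdvd (ZMod q₀)) h1
  rw [map_mul, map_one] at h2
  exact (ZMod.inv_eq_of_mul_eq_one q₀ _ _ h2).symm

lemma int_val_cast_proj (q₀ q : ℕ) [NeZero q] [NeZero q₀] (hdvd : q₀ ∣ q) (Y : ZMod q) :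
    ((Y.val : ℤ) : ZMod q₀) = ZMod.castHom hdvd (ZMod q₀) Y := by
  conv_rhs => rw [← val_intCast_self q Y]
  rw [map_intCast]

/-- Factorization of the `L`-sums under twisted multiplicativity: for `q₀ ≠ q₁` primes,
`q = q₀q₁`, `K₀` `q₀`-periodic, `K₁` `q₁`-periodic and `K = K₀K₁`, one has
`L_{α,β}(u q₁; q) = L⁰_{α q̄₁², β}(u) · L¹_{α q̄₀², β}(0)`, where `q̄₁² q₁² ≡ 1 (mod q₀)`
and `q̄₀² q₀² ≡ 1 (mod q₁)`, `L` is formed with `K̂(·; q)`, `L⁰` with `K̂₀(·; q₀)` and `L¹`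
with `K̂₁(·; q₁)`. -/
theorem Lsum_factorization (q₀ q₁ : ℕ) (hq₀ : q₀.Prime) (hq₁ : q₁.Prime) (hne : q₀ ≠ q₁)
    (K₀ K₁ : ℤ → ℂ) (hK₀ : ∀ x : ℤ, K₀ (x + (q₀ : ℤ)) = K₀ x)
    (hK₁ : ∀ x : ℤ, K₁ (x + (q₁ : ℤ)) = K₁ x)
    (qb₁sq qb₀sq : ℤ) (hqb₁sq : qb₁sq * (q₁ : ℤ) ^ 2 ≡ 1 [ZMOD (q₀ : ℤ)])
    (hqb₀sq : qb₀sq * (q₀ : ℤ) ^ 2 ≡ 1 [ZMOD (q₁ : ℤ)]) (α β u : ℤ) :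
    Lsum (q₀ * q₁) (Fhat (q₀ * q₁) (fun x => K₀ x * K₁ x)) α β (u * (q₁ : ℤ)) =
      Lsum q₀ (Fhat q₀ K₀) (α * qb₁sq) β u * Lsum q₁ (Fhat q₁ K₁) (α * qb₀sq) β 0 := by
  haveI : Fact q₀.Prime := ⟨hq₀⟩
  haveI : Fact q₁.Prime := ⟨hq₁⟩
  haveI : NeZero q₀ := ⟨hq₀.ne_zero⟩
  haveI : NeZero q₁ := ⟨hq₁.ne_zero⟩
  haveI : NeZero (q₀ * q₁) := ⟨mul_ne_zero hq₀.ne_zero hq₁.ne_zero⟩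
  have hcop : Nat.Coprime q₀ q₁ := (Nat.coprime_primes hq₀ hq₁).mpr hne
  obtain ⟨a, b, hab⟩ : IsCoprime ((q₁ : ℤ)) ((q₀ : ℤ)) :=
    Nat.isCoprime_iff_coprime.mpr hcop.symm
  -- hab : a * q₁ + b * q₀ = 1
  set Q1 : ZMod q₀ := ((q₁ : ℕ) : ZMod q₀) with hQ1def
  set Q0 : ZMod q₁ := ((q₀ : ℕ) : ZMod q₁) with hQ0def
  have hQ1 : Q1 ≠ 0 := by
    rw [hQ1def, Ne, ZMod.natCast_eq_zero_iff]
    exact (Nat.Prime.coprime_iff_not_dvd hq₀).mp hcop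
  have hQ0 : Q0 ≠ 0 := by
    rw [hQ0def, Ne, ZMod.natCast_eq_zero_iff]
    exact (Nat.Prime.coprime_iff_not_dvd hq₁).mp hcop.symm
  have haQ1 : ((a : ℤ) : ZMod q₀) * Q1 = 1 := by
    have := congrArg (fun t : ℤ => ((t : ZMod q₀))) hab
    push_cast at this
    simpa [ZMod.natCast_self] using this
  have hbQ0 : ((b : ℤ) : ZMod q₁) * Q0 = 1 := by
    have := congrArg (fun t : ℤ => ((t : ZMod q₁))) hab
    push_cast at this
    simpa [ZMod.natCast_self] using this
  have haInv : ((a : ℤ) : ZMod q₀) = Q1⁻¹ := eq_inv_of_mul_eq_one_left haQ1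
  have hbInv : ((b : ℤ) : ZMod q₁) = Q0⁻¹ := eq_inv_of_mul_eq_one_left hbQ0
  have hqb1 : ((qb₁sq : ℤ) : ZMod q₀) = (Q1 ^ 2)⁻¹ := by
    apply eq_inv_of_mul_eq_one_left
    have := (ZMod.intCast_eq_intCast_iff _ _ _).mpr hqb₁sq
    push_cast at this
    simpa [hQ1def] using this
  have hqb0 : ((qb₀sq : ℤ) : ZMod q₁) = (Q0 ^ 2)⁻¹ := by
    apply eq_inv_of_mul_eq_one_left
    have := (ZMod.intCast_eq_intCast_iff _ _ _).mpr hqb₀sq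
    push_cast at this
    simpa [hQ0def] using this
  -- the local functions
  set c₀ : ZMod q₀ := ((β * (u * (q₁:ℤ)) : ℤ) : ZMod q₀) with hc₀def
  set g : ℤ → ℂ := fun m =>
    if Int.gcd (m + β * (u * (q₁:ℤ))) (((q₀*q₁ : ℕ)) : ℤ) = 1 then
      Fhat (q₀*q₁) (fun x => K₀ x * K₁ x) m *
        psi (q₀*q₁) (α * ((((m + β * (u * (q₁:ℤ)) : ℤ) : ZMod (q₀*q₁))⁻¹).val : ℤ))
    else 0 with hgdef
  set H₀ : ZMod q₀ → ℂ := fun x =>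
    if IsUnit (x + c₀) then
      Fhat q₀ K₀ (a * (x.val : ℤ)) * psi q₀ (α * a * (((x + c₀)⁻¹).val : ℤ))
    else 0 with hH₀def
  set H₁ : ZMod q₁ → ℂ := fun x =>
    if IsUnit x then
      Fhat q₁ K₁ (b * (x.val : ℤ)) * psi q₁ (α * b * ((x⁻¹).val : ℤ))
    else 0 with hH₁def
  set g₀ : ℤ → ℂ := fun m =>
    if Int.gcd (m + β * u) (((q₀ : ℕ)) : ℤ) = 1 then
      Fhat q₀ K₀ m * psi q₀ ((α * qb₁sq) * ((((m + β * u : ℤ) : ZMod q₀)⁻¹).val : ℤ))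
    else 0 with hg₀def
  set g₁ : ℤ → ℂ := fun m =>
    if Int.gcd (m + β * 0) (((q₁ : ℕ)) : ℤ) = 1 then
      Fhat q₁ K₁ m * psi q₁ ((α * qb₀sq) * ((((m + β * 0 : ℤ) : ZMod q₁)⁻¹).val : ℤ))
    else 0 with hg₁def
  -- invariance of g mod q₀q₁
  have hg : ∀ m m' : ℤ, ((m : ZMod (q₀*q₁))) = (m' : ZMod (q₀*q₁)) → g m = g m' := by
    intro m m' hmm
    have hc : ((m + β * (u * (q₁:ℤ)) : ℤ) : ZMod (q₀*q₁)) = ((m' + β * (u * (q₁:ℤ)) : ℤ) : ZMod (q₀*q₁)) := by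
      push_cast [hmm]; ring
    have hcond : (Int.gcd (m + β * (u * (q₁:ℤ))) (((q₀*q₁:ℕ)):ℤ) = 1)
        ↔ (Int.gcd (m' + β * (u * (q₁:ℤ))) (((q₀*q₁:ℕ)):ℤ) = 1) := by
      rw [gcd_eq_one_iff_isUnit, gcd_eq_one_iff_isUnit, hc]
    rw [hgdef]
    simp only
    by_cases hcase : Int.gcd (m + β * (u * (q₁:ℤ))) (((q₀*q₁:ℕ)):ℤ) = 1
    · rw [if_pos hcase, if_pos (hcond.mp hcase), Fhat_congr (q₀*q₁) _ hmm, hc]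
    · rw [if_neg hcase, if_neg (fun hh => hcase (hcond.mpr hh))]
  -- invariance of g₀ mod q₀, g₁ mod q₁
  have hg₀ : ∀ m m' : ℤ, ((m : ZMod q₀)) = (m' : ZMod q₀) → g₀ m = g₀ m' := by
    intro m m' hmm
    have hc : ((m + β * u : ℤ) : ZMod q₀) = ((m' + β * u : ℤ) : ZMod q₀) := by push_cast [hmm]; ring
    have hcond : (Int.gcd (m + β * u) (((q₀:ℕ)):ℤ) = 1) ↔ (Int.gcd (m' + β * u) (((q₀:ℕ)):ℤ) = 1) := by
      rw [gcd_eq_one_iff_isUnit, gcd_eq_one_iff_isUnit, hc]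
    rw [hg₀def]
    simp only
    by_cases hcase : Int.gcd (m + β * u) (((q₀:ℕ)):ℤ) = 1
    · rw [if_pos hcase, if_pos (hcond.mp hcase), Fhat_congr q₀ _ hmm, hc]
    · rw [if_neg hcase, if_neg (fun hh => hcase (hcond.mpr hh))]
  have hg₁ : ∀ m m' : ℤ, ((m : ZMod q₁)) = (m' : ZMod q₁) → g₁ m = g₁ m' := by
    intro m m' hmm
    have hc : ((m + β * 0 : ℤ) : ZMod q₁) = ((m' + β * 0 : ℤ) : ZMod q₁) := by push_cast [hmm]; ring
    have hcond : (Int.gcd (m + β * 0) (((q₁:ℕ)):ℤ) = 1) ↔ (Int.gcd (m' + β * 0) (((q₁:ℕ)):ℤ) = 1) := by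
      rw [gcd_eq_one_iff_isUnit, gcd_eq_one_iff_isUnit, hc]
    rw [hg₁def]
    simp only
    by_cases hcase : Int.gcd (m + β * 0) (((q₁:ℕ)):ℤ) = 1
    · rw [if_pos hcase, if_pos (hcond.mp hcase), Fhat_congr q₁ _ hmm, hc]
    · rw [if_neg hcase, if_neg (fun hh => hcase (hcond.mpr hh))]
  -- the key pointwise factorization
  have key : ∀ m : ℤ, g m = H₀ ((m : ZMod q₀)) * H₁ ((m : ZMod q₁)) := by
    intro m
    have hn0 : ((m + β * (u * (q₁:ℤ)) : ℤ) : ZMod q₀) = (m : ZMod q₀) + c₀ := by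
      rw [hc₀def]; push_cast; ring
    have hn1 : ((m + β * (u * (q₁:ℤ)) : ℤ) : ZMod q₁) = (m : ZMod q₁) := by
      push_cast [ZMod.natCast_self]; ring
    have hcond : Int.gcd (m + β * (u * (q₁:ℤ))) (((q₀*q₁:ℕ)):ℤ) = 1
        ↔ (IsUnit ((m : ZMod q₀) + c₀) ∧ IsUnit ((m : ZMod q₁))) := by
      rw [← Int.isCoprime_iff_gcd_eq_one,
        show (((q₀*q₁:ℕ)):ℤ) = ((q₀:ℕ):ℤ) * ((q₁:ℕ):ℤ) by push_cast; ring,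
        IsCoprime.mul_right_iff, Int.isCoprime_iff_gcd_eq_one, Int.isCoprime_iff_gcd_eq_one,
        gcd_eq_one_iff_isUnit, gcd_eq_one_iff_isUnit, hn0, hn1]
    rw [hgdef, hH₀def, hH₁def]
    simp only
    by_cases hcase : Int.gcd (m + β * (u * (q₁:ℤ))) (((q₀*q₁:ℕ)):ℤ) = 1
    · obtain ⟨hu0, hu1⟩ := hcond.mp hcase
      rw [if_pos hcase, if_pos hu0, if_pos hu1]
      have hXunit : IsUnit (((m + β * (u * (q₁:ℤ)) : ℤ) : ZMod (q₀*q₁))) :=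
        (gcd_eq_one_iff_isUnit (q₀*q₁) _).mp hcase
      have hF : Fhat (q₀*q₁) (fun x => K₀ x * K₁ x) m
          = Fhat q₀ K₀ (a * (((m : ZMod q₀)).val : ℤ)) * Fhat q₁ K₁ (b * (((m : ZMod q₁)).val : ℤ)) := by
        rw [Fhat_factor q₀ q₁ hcop K₀ K₁ hK₀ hK₁ a b hab m,
          Fhat_congr q₀ K₀ (show ((a * m : ℤ) : ZMod q₀) = ((a * (((m : ZMod q₀)).val : ℤ) : ℤ) : ZMod q₀) by
            push_cast [ZMod.natCast_val, ZMod.cast_id]; ring),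
          Fhat_congr q₁ K₁ (show ((b * m : ℤ) : ZMod q₁) = ((b * (((m : ZMod q₁)).val : ℤ) : ℤ) : ZMod q₁) by
            push_cast [ZMod.natCast_val, ZMod.cast_id]; ring)]
      have hv0 : (((((m + β * (u * (q₁:ℤ)) : ℤ) : ZMod (q₀*q₁))⁻¹).val : ℤ) : ZMod q₀)
          = ((m : ZMod q₀) + c₀)⁻¹ := by
        rw [int_val_cast_proj q₀ (q₀*q₁) (dvd_mul_right _ _) _,
          castHom_inv q₀ (q₀*q₁) (dvd_mul_right _ _) _ hXunit, map_intCast, hn0]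
      have hv1 : (((((m + β * (u * (q₁:ℤ)) : ℤ) : ZMod (q₀*q₁))⁻¹).val : ℤ) : ZMod q₁)
          = ((m : ZMod q₁))⁻¹ := by
        rw [int_val_cast_proj q₁ (q₀*q₁) (dvd_mul_left _ _) _,
          castHom_inv q₁ (q₀*q₁) (dvd_mul_left _ _) _ hXunit, map_intCast, hn1]
      have hpsi : psi (q₀*q₁) (α * ((((m + β * (u * (q₁:ℤ)) : ℤ) : ZMod (q₀*q₁))⁻¹).val : ℤ))
          = psi q₀ (α * a * ((((m : ZMod q₀) + c₀)⁻¹).val : ℤ))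
            * psi q₁ (α * b * ((((m : ZMod q₁))⁻¹).val : ℤ)) := by
        rw [psi_crt q₀ q₁ (NeZero.ne q₀) (NeZero.ne q₁) a b hab]
        congr 1
        · apply psi_congr
          push_cast at hv0 ⊢
          rw [hv0, ZMod.natCast_val, ZMod.cast_id]
          ring
        · apply psi_congr
          push_cast at hv1 ⊢
          rw [hv1, ZMod.natCast_val, ZMod.cast_id]
          ring
      rw [hF, hpsi]
      ring
    · rw [if_neg hcase]
      rcases not_and_or.mp (fun hh => hcase (hcond.mpr hh)) with h0 | h1
      · rw [if_neg h0, zero_mul]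
      · rw [if_neg h1, mul_zero]
  -- pointwise matching on the q₀ side
  have pt0 : ∀ z : ZMod q₀, g₀ ((z.val : ℤ)) = H₀ (z * Q1) := by
    intro z
    have hsplit : z * Q1 + c₀ = (z + ((β * u : ℤ) : ZMod q₀)) * Q1 := by
      rw [hc₀def, hQ1def]; push_cast; ring
    have hel : (((z.val : ℤ) + β * u : ℤ) : ZMod q₀) = z + ((β * u : ℤ) : ZMod q₀) := by
      push_cast [ZMod.natCast_val, ZMod.cast_id]; ring
    have hQ1unit : IsUnit Q1 := isUnit_iff_ne_zero.mpr hQ1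
    have hcond : Int.gcd ((z.val : ℤ) + β * u) (((q₀:ℕ)):ℤ) = 1 ↔ IsUnit (z * Q1 + c₀) := by
      rw [gcd_eq_one_iff_isUnit, hel, hsplit, IsUnit.mul_iff]
      exact ⟨fun h => ⟨h, hQ1unit⟩, fun h => h.1⟩
    rw [hg₀def, hH₀def]
    simp only
    by_cases hcase : Int.gcd ((z.val : ℤ) + β * u) (((q₀:ℕ)):ℤ) = 1
    · rw [if_pos hcase, if_pos (hcond.mp hcase)]
      congr 1
      · apply Fhat_congr
        push_cast [ZMod.natCast_val, ZMod.cast_id]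
        rw [show ((a : ℤ) : ZMod q₀) * (z * Q1) = z * (((a:ℤ) : ZMod q₀) * Q1) by ring, haQ1, mul_one]
      · apply psi_congr
        rw [hsplit, hel, mul_inv_rev]
        push_cast [ZMod.natCast_val, ZMod.cast_id]
        rw [haInv, hqb1, sq, mul_inv_rev]
        ring
    · rw [if_neg hcase, if_neg (fun hh => hcase (hcond.mpr hh))]
  -- pointwise matching on the q₁ side
  have pt1 : ∀ z : ZMod q₁, g₁ ((z.val : ℤ)) = H₁ (z * Q0) := by
    intro z
    have hel : (((z.val : ℤ) + β * 0 : ℤ) : ZMod q₁) = z := by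
      push_cast [ZMod.natCast_val, ZMod.cast_id]; ring
    have hQ0unit : IsUnit Q0 := isUnit_iff_ne_zero.mpr hQ0
    have hcond : Int.gcd ((z.val : ℤ) + β * 0) (((q₁:ℕ)):ℤ) = 1 ↔ IsUnit (z * Q0) := by
      rw [gcd_eq_one_iff_isUnit, hel, IsUnit.mul_iff]
      exact ⟨fun h => ⟨h, hQ0unit⟩, fun h => h.1⟩
    rw [hg₁def, hH₁def]
    simp only
    by_cases hcase : Int.gcd ((z.val : ℤ) + β * 0) (((q₁:ℕ)):ℤ) = 1
    · rw [if_pos hcase, if_pos (hcond.mp hcase)]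
      congr 1
      · apply Fhat_congr
        push_cast [ZMod.natCast_val, ZMod.cast_id]
        rw [show ((b : ℤ) : ZMod q₁) * (z * Q0) = z * (((b:ℤ) : ZMod q₁) * Q0) by ring, hbQ0, mul_one]
      · apply psi_congr
        rw [hel, mul_inv_rev]
        push_cast [ZMod.natCast_val, ZMod.cast_id]
        rw [hbInv, hqb0, sq, mul_inv_rev]
        ring
    · rw [if_neg hcase, if_neg (fun hh => hcase (hcond.mpr hh))]
  -- assemble the sums
  have match0 : ∑ x : ZMod q₀, H₀ x = ∑ z : ZMod q₀, g₀ ((z.val : ℤ)) :=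
    (Fintype.sum_bijective _ (mulRight_bijective₀ Q1 hQ1) _ _ pt0).symm
  have match1 : ∑ x : ZMod q₁, H₁ x = ∑ z : ZMod q₁, g₁ ((z.val : ℤ)) :=
    (Fintype.sum_bijective _ (mulRight_bijective₀ Q0 hQ0) _ _ pt1).symm
  have L : Lsum (q₀ * q₁) (Fhat (q₀ * q₁) (fun x => K₀ x * K₁ x)) α β (u * (q₁:ℤ))
      = (Real.sqrt ((q₀*q₁ : ℕ)) : ℂ)⁻¹ * ((∑ x : ZMod q₀, H₀ x) * (∑ x : ZMod q₁, H₁ x)) := by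
    rw [Lsum_eq_psi]
    congr 1
    exact (sum_range_eq_sum_zmod (q₀*q₁) g hg).trans (sum_zmod_factor q₀ q₁ hcop g H₀ H₁ key)
  have L0 : Lsum q₀ (Fhat q₀ K₀) (α * qb₁sq) β u
      = (Real.sqrt q₀ : ℂ)⁻¹ * ∑ z : ZMod q₀, g₀ ((z.val : ℤ)) := by
    rw [Lsum_eq_psi]
    congr 1
    exact sum_range_eq_sum_zmod q₀ g₀ hg₀
  have L1 : Lsum q₁ (Fhat q₁ K₁) (α * qb₀sq) β 0
      = (Real.sqrt q₁ : ℂ)⁻¹ * ∑ z : ZMod q₁, g₁ ((z.val : ℤ)) := by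
    rw [Lsum_eq_psi]
    congr 1
    exact sum_range_eq_sum_zmod q₁ g₁ hg₁
  rw [L, L0, L1, ← match0, ← match1, sqrt_mul_inv]
  ring
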